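/- For every integer k ≥ 1, setting μ = 18 + 2k, the following inequality of rational numbers holds: (19/22 − 3/2)² + (23/22 − 3/2)² + (27/22 − 3/2)² + (29/22 − 3/2)² + (31/22 − 3/2)² + (3/2 − 3/2)² + (35/22 − 3/2)² + (37/22 − 3/2)² + (39/22 − 3/2)² + (43/22 − 3/2)² + (47/22 − 3/2)² + ∑_{l=1}^{2k+7} ((l + 2k + 8)/(2(k+4)) − 3/2)² ≤ (μ/12)·(47/22 − 19/22). -/
import Mathlib

lemma lin_sum (n : ℕ) : ∑ l ∈ Finset.Icc 1 n, (l : ℚ) = n * (n + 1) / 2 := by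
  induction n with
  | zero => simp
  | succ n ih =>
      rw [Finset.sum_Icc_succ_top (by omega), ih]
      push_cast
      ring

lemma sq_sum (n : ℕ) : ∑ l ∈ Finset.Icc 1 n, (l : ℚ) ^ 2 = n * (n + 1) * (2 * n + 1) / 6 := by
  induction n with
  | zero => simp
  | succ n ih =>
      rw [Finset.sum_Icc_succ_top (by omega), ih]
      push_cast
      ring

theorem stmt_12 (k : ℕ) (hk : 1 ≤ k) :
    ((19/22 : ℚ) - 3/2) ^ 2 +
      ((23/22 : ℚ) - 3/2) ^ 2 +
      ((27/22 : ℚ) - 3/2) ^ 2 +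
      ((29/22 : ℚ) - 3/2) ^ 2 +
      ((31/22 : ℚ) - 3/2) ^ 2 +
      ((3/2 : ℚ) - 3/2) ^ 2 +
      ((35/22 : ℚ) - 3/2) ^ 2 +
      ((37/22 : ℚ) - 3/2) ^ 2 +
      ((39/22 : ℚ) - 3/2) ^ 2 +
      ((43/22 : ℚ) - 3/2) ^ 2 +
      ((47/22 : ℚ) - 3/2) ^ 2 +
      ∑ l ∈ Finset.Icc 1 (2 * k + 7), (((l : ℚ) + 2 * (k : ℚ) + 8) / (2 * ((k : ℚ) + 4)) - 3/2) ^ 2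
    ≤ ((18 + 2 * (k : ℚ)) / 12) * (47/22 - 19/22) := by
  have hm : ((k : ℚ) + 4) ≠ 0 := by positivity
  have key : ∀ l ∈ Finset.Icc 1 (2 * k + 7),
      (((l : ℚ) + 2 * (k : ℚ) + 8) / (2 * ((k : ℚ) + 4)) - 3/2) ^ 2 =
      ((l : ℚ) ^ 2) * (1 / (4 * ((k : ℚ) + 4) ^ 2))
        + (l : ℚ) * (-(2 * ((k : ℚ) + 4)) / (4 * ((k : ℚ) + 4) ^ 2))
        + ((k : ℚ) + 4) ^ 2 / (4 * ((k : ℚ) + 4) ^ 2) := by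
    intro l _
    field_simp
    ring
  rw [Finset.sum_congr rfl key]
  simp only [Finset.sum_add_distrib, ← Finset.sum_mul, Finset.sum_const,
    Nat.card_Icc, lin_sum, sq_sum]
  have hk' : (1 : ℚ) ≤ (k : ℚ) := by exact_mod_cast hk
  push_cast
  rw [nsmul_eq_mul]
  push_cast
  rw [← sub_nonneg]
  have h4 : (0:ℚ) < (k:ℚ) + 4 := by positivity
  have E : ((18 + 2 * (k:ℚ)) / 12 * (47/22 - 19/22) -
      ((19/22 - 3/2) ^ 2 + (23/22 - 3/2) ^ 2 + (27/22 - 3/2) ^ 2 + (29/22 - 3/2) ^ 2 +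
        (31/22 - 3/2) ^ 2 + ((3:ℚ)/2 - 3/2) ^ 2 + (35/22 - 3/2) ^ 2 + (37/22 - 3/2) ^ 2 +
        (39/22 - 3/2) ^ 2 + (43/22 - 3/2) ^ 2 + (47/22 - 3/2) ^ 2 +
        ((2 * (k:ℚ) + 7) * (2 * (k:ℚ) + 7 + 1) * (2 * (2 * (k:ℚ) + 7) + 1) / 6 *
            (1 / (4 * ((k:ℚ) + 4) ^ 2)) +
          (2 * (k:ℚ) + 7) * (2 * (k:ℚ) + 7 + 1) / 2 *
            (-(2 * ((k:ℚ) + 4)) / (4 * ((k:ℚ) + 4) ^ 2)) +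
          (2 * (k:ℚ) + 7) * (((k:ℚ) + 4) ^ 2 / (4 * ((k:ℚ) + 4) ^ 2))))) =
      (6 * ((k:ℚ) + 4) ^ 2 - 19 * ((k:ℚ) + 4) - 11) / (132 * ((k:ℚ) + 4)) := by
    field_simp
    ring
  rw [E]
  apply div_nonneg _ (by positivity)
  nlinarith [hk']
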